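/- Let L ≥ 1 be an integer, let λ_1 > λ_2 > … > λ_L > 0 be distinct positive reals, let ζ ∈ (0,1), and define ξ_i = ∏_{j ≠ i} (1 − λ_j/λ_i) and F(z) = 1 − ζ·Σ_{i=1}^L e^{−z/λ_i}/ξ_i for z ∈ ℝ. Then for every z ∈ ℝ, lim_{K→∞} F(λ_1 z + λ_1 log K + λ_1 log(ζ/ξ_1))^K = exp(−exp(−z)). -/

import Mathlib

open Filter

/-- Gumbel-type convergence, Lemma 3 of the paper: for distinct positive
reals `λ_1 > … > λ_L > 0`, `ζ ∈ (0,1)`, `ξ_i = ∏_{j≠i}(1 - λ_j/λ_i)`, and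
`F z = 1 - ζ ∑_i e^{-z/λ_i}/ξ_i`, one has for every `z`,
`F(λ_1 z + λ_1 log K + λ_1 log(ζ/ξ_1))^K → exp(-exp(-z))` as `K → ∞`. -/
theorem stmt_14 (L : ℕ) (hL : 0 < L) (lam : Fin L → ℝ) (hpos : ∀ i, 0 < lam i)
    (hanti : ∀ i j : Fin L, i < j → lam j < lam i)
    (ζ : ℝ) (hζ0 : 0 < ζ) (hζ1 : ζ < 1)
    (ξ : Fin L → ℝ)
    (hξdef : ∀ i, ξ i = ∏ j ∈ Finset.univ.erase i, (1 - lam j / lam i))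
    (F : ℝ → ℝ)
    (hFdef : ∀ z, F z = 1 - ζ * ∑ i, Real.exp (-z / lam i) / ξ i)
    (z : ℝ) :
    Tendsto (fun K : ℕ =>
        F (lam ⟨0, hL⟩ * z + lam ⟨0, hL⟩ * Real.log K +
            lam ⟨0, hL⟩ * Real.log (ζ / ξ ⟨0, hL⟩)) ^ K)
      atTop (nhds (Real.exp (-Real.exp (-z)))) := by
  set i0 : Fin L := ⟨0, hL⟩ with hi0
  set l1 : ℝ := lam i0 with hl1def
  have hl1 : 0 < l1 := hpos i0
  have hlt : ∀ i : Fin L, i ≠ i0 → lam i < l1 := by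
    intro i hi
    exact hanti i0 i (by
      have : i.val ≠ 0 := fun h => hi (Fin.ext h)
      exact Fin.lt_def.mpr (Nat.pos_of_ne_zero this))
  have hξ1 : 0 < ξ i0 := by
    rw [hξdef]
    refine Finset.prod_pos ?_
    intro j hj
    have hj' : lam j < l1 := hlt j (Finset.mem_erase.mp hj).1
    have : lam j / l1 < 1 := (div_lt_one hl1).mpr hj'
    linarith
  set d : ℝ := z + Real.log (ζ / ξ i0) with hd
  set a : ℕ → ℝ := fun K => l1 * z + l1 * Real.log K + l1 * Real.log (ζ / ξ i0) with ha
  set S : ℕ → ℝ := fun K => ζ * ∑ i, Real.exp (-(a K) / lam i) / ξ i with hS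
  -- K * S K → e^{-z}
  have hKS : Tendsto (fun K : ℕ => (K : ℝ) * S K) atTop (nhds (Real.exp (-z))) := by
    have heq : ∀ᶠ K : ℕ in atTop, (K : ℝ) * S K =
        ζ * ∑ i, Real.exp (-(l1 / lam i) * d) / ξ i *
          Real.exp ((1 - l1 / lam i) * Real.log K) := by
      filter_upwards [eventually_ge_atTop 1] with K hK
      have hK0 : (0:ℝ) < K := by exact_mod_cast hK
      simp only [hS]
      rw [← mul_assoc, Finset.mul_sum, Finset.mul_sum]
      refine Finset.sum_congr rfl ?_
      intro i _
      have hli : lam i ≠ 0 := (hpos i).ne'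
      have hKexp : (K : ℝ) = Real.exp (Real.log K) := (Real.exp_log hK0).symm
      have harg : -(a K) / lam i = -(l1 / lam i) * d + -(l1 / lam i) * Real.log K := by
        simp only [ha, hd]; field_simp; ring
      rw [harg, Real.exp_add]
      rw [show (1 - l1 / lam i) * Real.log K = Real.log K + -(l1 / lam i) * Real.log K by ring,
        Real.exp_add, ← hKexp]
      ring
    have hlim : Tendsto (fun K : ℕ =>
        ζ * ∑ i, Real.exp (-(l1 / lam i) * d) / ξ i *
          Real.exp ((1 - l1 / lam i) * Real.log K)) atTop (nhds (Real.exp (-z))) := by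
      have hterm : ∀ i : Fin L, Tendsto (fun K : ℕ =>
          Real.exp (-(l1 / lam i) * d) / ξ i *
            Real.exp ((1 - l1 / lam i) * Real.log K)) atTop
          (nhds (if i = i0 then Real.exp (-d) / ξ i0 else 0)) := by
        intro i
        by_cases hi : i = i0
        · subst hi
          have h1 : (1 : ℝ) - l1 / lam i0 = 0 := by
            rw [hl1def, div_self (hpos i0).ne', sub_self]
          simp only [h1, zero_mul, Real.exp_zero, mul_one, if_pos rfl]
          have : -(l1 / lam i0) * d = -d := by rw [hl1def, div_self (hpos i0).ne']; ring
          rw [this]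
          exact tendsto_const_nhds
        · rw [if_neg hi]
          have hneg : (1 : ℝ) - l1 / lam i < 0 := by
            have := hlt i hi
            have h1 : (1:ℝ) < l1 / lam i := (one_lt_div (hpos i)).mpr this
            linarith
          have hlog : Tendsto (fun K : ℕ => Real.log K) atTop atTop :=
            Real.tendsto_log_atTop.comp tendsto_natCast_atTop_atTop
          have hbot : Tendsto (fun K : ℕ => (1 - l1 / lam i) * Real.log K) atTop atBot := by
            exact Tendsto.const_mul_atTop_of_neg hneg hlog
          have hexp0 : Tendsto (fun K : ℕ =>
              Real.exp ((1 - l1 / lam i) * Real.log K)) atTop (nhds 0) :=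
            Real.tendsto_exp_atBot.comp hbot
          simpa using hexp0.const_mul (Real.exp (-(l1 / lam i) * d) / ξ i)
      have hsum := tendsto_finset_sum Finset.univ (fun i _ => hterm i)
      have hmul := hsum.const_mul ζ
      have hval : ζ * ∑ i, (if i = i0 then Real.exp (-d) / ξ i0 else 0) = Real.exp (-z) := by
        rw [Finset.sum_ite_eq' Finset.univ i0 (fun _ => Real.exp (-d) / ξ i0)]
        simp only [Finset.mem_univ, if_pos]
        have h1 : Real.exp (-d) = Real.exp (-z) * (ξ i0 / ζ) := by
          rw [hd, neg_add, Real.exp_add]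
          congr 1
          rw [← Real.log_inv, inv_div, Real.exp_log (div_pos hξ1 hζ0)]
        rw [h1]
        field_simp
      rw [← hval]
      exact hmul
    exact hlim.congr' (heq.mono fun K h => h.symm)
  -- S K → 0
  have hS0 : Tendsto S atTop (nhds 0) := by
    have hinv : Tendsto (fun K : ℕ => ((K : ℝ))⁻¹) atTop (nhds 0) :=
      tendsto_inv_atTop_zero.comp tendsto_natCast_atTop_atTop
    have := hKS.mul hinv
    rw [mul_zero] at this
    refine this.congr' ?_
    filter_upwards [eventually_ge_atTop 1] with K hK
    have hK0 : (K:ℝ) ≠ 0 := by positivity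
    field_simp
  -- eventually 0 < S K and S K < 1/2
  have hev : ∀ᶠ K : ℕ in atTop, 0 < S K ∧ S K < 1/2 := by
    have h1 : ∀ᶠ K : ℕ in atTop, 0 < (K:ℝ) * S K := by
      have := hKS.eventually (eventually_gt_nhds (Real.exp_pos (-z)))
      filter_upwards [this] with K h; linarith [Real.exp_pos (-z)]
    have h2 : ∀ᶠ K : ℕ in atTop, S K < 1/2 :=
      hS0.eventually (eventually_lt_nhds (by norm_num : (0:ℝ) < 1/2))
    filter_upwards [h1, h2, eventually_ge_atTop 1] with K hK1 hK2 hK3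
    refine ⟨?_, hK2⟩
    have hK0 : (0:ℝ) < K := by exact_mod_cast hK3
    by_contra hc
    push_neg at hc
    nlinarith
  -- log(1-t)/t → -1
  have hslope : Tendsto (fun t : ℝ => Real.log (1 - t) / t) (nhdsWithin 0 {0}ᶜ) (nhds (-1)) := by
    have h : HasDerivAt (fun t : ℝ => Real.log (1 - t)) (-1) 0 := by
      have := (Real.hasDerivAt_log (x := 1 - (0:ℝ)) (by norm_num)).comp 0
        ((hasDerivAt_const (0:ℝ) (1:ℝ)).sub (hasDerivAt_id 0))
      simpa [Function.comp_def] using this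
    have := hasDerivAt_iff_tendsto_slope.mp h
    refine this.congr ?_
    intro t
    simp only [slope, Real.log_one, vsub_eq_sub, sub_zero, smul_eq_mul]
    ring
  have hSne : Tendsto S atTop (nhdsWithin 0 {0}ᶜ) := by
    rw [tendsto_nhdsWithin_iff]
    exact ⟨hS0, by filter_upwards [hev] with K hK; exact fun h => absurd h (ne_of_gt hK.1)⟩
  have hratio : Tendsto (fun K => Real.log (1 - S K) / S K) atTop (nhds (-1)) :=
    hslope.comp hSne
  -- K * log(1 - S K) → -e^{-z}
  have hKlog : Tendsto (fun K : ℕ => (K : ℝ) * Real.log (1 - S K)) atTop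
      (nhds (-Real.exp (-z))) := by
    have := hKS.mul hratio
    rw [mul_neg_one] at this
    refine this.congr' ?_
    filter_upwards [hev] with K hK
    have : S K ≠ 0 := ne_of_gt hK.1
    field_simp
  -- conclude
  have hfinal := (Real.continuous_exp.tendsto _).comp hKlog
  refine hfinal.congr' ?_
  filter_upwards [hev] with K hK
  have hF : F (a K) = 1 - S K := by rw [hFdef, hS]
  have hFpos : 0 < 1 - S K := by linarith [hK.2]
  show Real.exp ((K:ℝ) * Real.log (1 - S K)) = F (a K) ^ K
  rw [hF, Real.exp_nat_mul, Real.exp_log hFpos]
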